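/- Let f, w be continuous positive functions on an interval with w/f strictly increasing and Φ > 0 continuous. If u ≠ ũ are in the interval, then f(u)∫_u^{ũ} w(s)Φ(s) ds - w(u)∫_u^{ũ} f(s)Φ(s) ds and w(ũ)∫_u^{ũ} f(s)Φ(s) ds - f(ũ)∫_u^{ũ} w(s)Φ(s) ds are both strictly positive when u < ũ (and both strictly positive with the orientation of the integral accounted for when ũ < u); in particular their sum vanishes only if u = ũ. -/
import Mathlib


open MeasureTheory intervalIntegral

private lemma stmt11_pos_int (J : Set ℝ) (hJ : J.OrdConnected) (g : ℝ → ℝ)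
    (hg : ContinuousOn g J) (a b : ℝ) (ha : a ∈ J) (hb : b ∈ J) (hab : a < b)
    (hpos : ∀ s ∈ Set.Ioo a b, 0 < g s) : 0 < ∫ s in a..b, g s := by
  have hsub : Set.uIcc a b ⊆ J := hJ.uIcc_subset ha hb
  have hint : IntervalIntegrable g volume a b := (hg.mono hsub).intervalIntegrable
  exact intervalIntegral.intervalIntegral_pos_of_pos_on hint hpos hab

private lemma stmt11_split (J : Set ℝ) (hJ : J.OrdConnected) (f w Φ : ℝ → ℝ)
    (hf : ContinuousOn f J) (hw : ContinuousOn w J) (hΦ : ContinuousOn Φ J)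
    (a b : ℝ) (ha : a ∈ J) (hb : b ∈ J) (c d : ℝ) :
    (∫ s in a..b, (c * w s - d * f s) * Φ s)
      = c * (∫ s in a..b, w s * Φ s) - d * ∫ s in a..b, f s * Φ s := by
  have hsub : Set.uIcc a b ⊆ J := hJ.uIcc_subset ha hb
  have hwΦ : IntervalIntegrable (fun s => w s * Φ s) volume a b :=
    ((hw.mul hΦ).mono hsub).intervalIntegrable
  have hfΦ : IntervalIntegrable (fun s => f s * Φ s) volume a b :=
    ((hf.mul hΦ).mono hsub).intervalIntegrable
  rw [show (fun s => (c * w s - d * f s) * Φ s)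
      = fun s => c * (w s * Φ s) - d * (f s * Φ s) from by funext s; ring]
  rw [intervalIntegral.integral_sub (hwΦ.const_mul c) (hfΦ.const_mul d),
    intervalIntegral.integral_const_mul, intervalIntegral.integral_const_mul]

private lemma stmt11_keyA (J : Set ℝ) (hJ : J.OrdConnected) (f w Φ : ℝ → ℝ)
    (hf : ContinuousOn f J) (hw : ContinuousOn w J) (hΦ : ContinuousOn Φ J)
    (hfpos : ∀ s ∈ J, 0 < f s) (hΦpos : ∀ s ∈ J, 0 < Φ s)
    (a b p : ℝ) (ha : a ∈ J) (hb : b ∈ J) (hp : p ∈ J) (hab : a < b)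
    (hlt : ∀ s ∈ Set.Ioo a b, w p / f p < w s / f s) :
    0 < f p * (∫ s in a..b, w s * Φ s) - w p * ∫ s in a..b, f s * Φ s := by
  rw [← stmt11_split J hJ f w Φ hf hw hΦ a b ha hb (f p) (w p)]
  apply stmt11_pos_int J hJ _ (((continuousOn_const.mul hw).sub
    (continuousOn_const.mul hf)).mul hΦ) a b ha hb hab
  intro s hs
  have hsJ : s ∈ J := hJ.out ha hb (Set.Ioo_subset_Icc_self hs)
  have h1 := hlt s hs
  have h2 := (div_lt_div_iff₀ (hfpos p hp) (hfpos s hsJ)).mp h1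
  have h3 : 0 < f p * w s - w p * f s := by nlinarith
  exact mul_pos h3 (hΦpos s hsJ)

private lemma stmt11_keyB (J : Set ℝ) (hJ : J.OrdConnected) (f w Φ : ℝ → ℝ)
    (hf : ContinuousOn f J) (hw : ContinuousOn w J) (hΦ : ContinuousOn Φ J)
    (hfpos : ∀ s ∈ J, 0 < f s) (hΦpos : ∀ s ∈ J, 0 < Φ s)
    (a b p : ℝ) (ha : a ∈ J) (hb : b ∈ J) (hp : p ∈ J) (hab : a < b)
    (hlt : ∀ s ∈ Set.Ioo a b, w s / f s < w p / f p) :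
    0 < w p * (∫ s in a..b, f s * Φ s) - f p * ∫ s in a..b, w s * Φ s := by
  have := stmt11_split J hJ f w Φ hf hw hΦ a b ha hb (f p) (w p)
  have key : 0 < ∫ s in a..b, (w p * f s - f p * w s) * Φ s := by
    apply stmt11_pos_int J hJ _ (((continuousOn_const.mul hf).sub
      (continuousOn_const.mul hw)).mul hΦ) a b ha hb hab
    intro s hs
    have hsJ : s ∈ J := hJ.out ha hb (Set.Ioo_subset_Icc_self hs)
    have h2 := (div_lt_div_iff₀ (hfpos s hsJ) (hfpos p hp)).mp (hlt s hs)
    have h3 : 0 < w p * f s - f p * w s := by nlinarith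
    exact mul_pos h3 (hΦpos s hsJ)
  have heq : (∫ s in a..b, (w p * f s - f p * w s) * Φ s)
      = w p * (∫ s in a..b, f s * Φ s) - f p * ∫ s in a..b, w s * Φ s := by
    have hsub : Set.uIcc a b ⊆ J := hJ.uIcc_subset ha hb
    have hwΦ : IntervalIntegrable (fun s => w s * Φ s) volume a b :=
      ((hw.mul hΦ).mono hsub).intervalIntegrable
    have hfΦ : IntervalIntegrable (fun s => f s * Φ s) volume a b :=
      ((hf.mul hΦ).mono hsub).intervalIntegrable
    rw [show (fun s => (w p * f s - f p * w s) * Φ s)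
        = fun s => w p * (f s * Φ s) - f p * (w s * Φ s) from by funext s; ring]
    rw [intervalIntegral.integral_sub (hfΦ.const_mul _) (hwΦ.const_mul _),
      intervalIntegral.integral_const_mul, intervalIntegral.integral_const_mul]
  linarith [heq ▸ key]

/-- if `f, w > 0`, `w/f` is strictly increasing and `Φ > 0` on an interval
`J`, then for `u ≠ ut` in `J` the quantities `f(u)∫_u^ut wΦ - w(u)∫_u^ut fΦ` and
`w(ut)∫_u^ut fΦ - f(ut)∫_u^ut wΦ` (oriented integrals) are both strictly positive;
in particular their sum vanishes only if `u = ut`. -/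
theorem stmt11 (J : Set ℝ) (hJ : J.OrdConnected) (f w Φ : ℝ → ℝ)
    (hf : ContinuousOn f J) (hw : ContinuousOn w J) (hΦ : ContinuousOn Φ J)
    (hfpos : ∀ s ∈ J, 0 < f s) (hwpos : ∀ s ∈ J, 0 < w s) (hΦpos : ∀ s ∈ J, 0 < Φ s)
    (hmono : StrictMonoOn (fun s => w s / f s) J)
    (u ut : ℝ) (hu : u ∈ J) (hut : ut ∈ J) :
    (u ≠ ut →
        0 < f u * (∫ s in u..ut, w s * Φ s) - w u * (∫ s in u..ut, f s * Φ s)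
          ∧ 0 < w ut * (∫ s in u..ut, f s * Φ s) - f ut * ∫ s in u..ut, w s * Φ s)
      ∧ ((f u * (∫ s in u..ut, w s * Φ s) - w u * (∫ s in u..ut, f s * Φ s))
            + (w ut * (∫ s in u..ut, f s * Φ s) - f ut * ∫ s in u..ut, w s * Φ s) = 0
          → u = ut) := by
  have main : u ≠ ut →
      0 < f u * (∫ s in u..ut, w s * Φ s) - w u * (∫ s in u..ut, f s * Φ s)
        ∧ 0 < w ut * (∫ s in u..ut, f s * Φ s) - f ut * ∫ s in u..ut, w s * Φ s := by
    intro hne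
    rcases lt_or_gt_of_ne hne with h | h
    · constructor
      · exact stmt11_keyA J hJ f w Φ hf hw hΦ hfpos hΦpos u ut u hu hut hu h
          (fun s hs => hmono hu (hJ.out hu hut (Set.Ioo_subset_Icc_self hs)) hs.1)
      · exact stmt11_keyB J hJ f w Φ hf hw hΦ hfpos hΦpos u ut ut hu hut hut h
          (fun s hs => hmono (hJ.out hu hut (Set.Ioo_subset_Icc_self hs)) hut hs.2)
    · have h1 := stmt11_keyB J hJ f w Φ hf hw hΦ hfpos hΦpos ut u u hut hu hu h
        (fun s hs => hmono (hJ.out hut hu (Set.Ioo_subset_Icc_self hs)) hu hs.2)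
      have h2 := stmt11_keyA J hJ f w Φ hf hw hΦ hfpos hΦpos ut u ut hut hu hut h
        (fun s hs => hmono hut (hJ.out hut hu (Set.Ioo_subset_Icc_self hs)) hs.1)
      have e1 : (∫ s in u..ut, w s * Φ s) = -∫ s in ut..u, w s * Φ s :=
        intervalIntegral.integral_symm ut u
      have e2 : (∫ s in u..ut, f s * Φ s) = -∫ s in ut..u, f s * Φ s :=
        intervalIntegral.integral_symm ut u
      rw [e1, e2]
      constructor <;> linarith
  refine ⟨main, fun hsum => ?_⟩
  by_contra hne
  obtain ⟨h1, h2⟩ := main hne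
  linarith
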